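/- arXiv:1706.06323 — 2 statements merged into one kernel-verified Lean document; each statement's English description precedes it below -/
import Mathlib

section
/- Let b ≥ 2, a, c, d ∈ Z_b with |a|_b < 1 (i.e., a is a non-unit in each local factor, equivalently a ∈ p·Z_b for every prime p dividing b) and c a unit of Z_b. Then the sequence (a·n² + c·n + d)_{n≥0} is uniformly distributed in Z_b. -/
/-- The ring of `b`-adic integers, modeled as the inverse limit of the rings `ZMod (b^k)`,
realized as a subring of the product ring. -/
def Zb (b : ℕ) : Subring (∀ k : ℕ, ZMod (b ^ k)) where
  carrier := {x | ∀ k, ZMod.castHom (pow_dvd_pow b (Nat.le_succ k)) (ZMod (b ^ k)) (x (k + 1)) = x k}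
  zero_mem' := fun k => map_zero _
  one_mem' := fun k => map_one _
  add_mem' := fun hx hy k => by rw [Pi.add_apply, map_add, hx k, hy k]; rfl
  mul_mem' := fun hx hy k => by rw [Pi.mul_apply, map_mul, hx k, hy k]; rfl
  neg_mem' := fun hx k => by rw [Pi.neg_apply, map_neg, hx k]; rfl

/-- The canonical embedding of the nonnegative integers into the `b`-adic integers. -/
def natToZb (b : ℕ) (n : ℕ) : ↥(Zb b) := ⟨fun k => (n : ZMod (b ^ k)), fun _ => map_natCast _ n⟩

/-- A sequence of `b`-adic integers is uniformly distributed in `Z_b` if for every `k ≥ 1`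
every residue class `a` mod `b^k` has asymptotic frequency `b^{-k}`. -/
def UDZb (b : ℕ) (x : ℕ → ↥(Zb b)) : Prop :=
  ∀ k : ℕ, 1 ≤ k → ∀ a : ZMod (b ^ k),
    Filter.Tendsto
      (fun N => (((Finset.range N).filter (fun n => (x n).1 k = a)).card : ℝ) / N)
      Filter.atTop (nhds (1 / (b : ℝ) ^ k))

open Filter Finset in
lemma aux_count_tendsto (m : ℕ) (hm : 0 < m) (v : ℕ) :
    Filter.Tendsto
      (fun N => ((((Finset.range N).filter (fun n => n ≡ v [MOD m])).card : ℝ) / N))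
      Filter.atTop (nhds (1 / m)) := by
  have key : ∀ N : ℕ, (((Finset.range N).filter (fun n => n ≡ v [MOD m])).card : ℝ)
      = ((N / m : ℕ) : ℝ) + (if v % m < N % m then 1 else 0) := by
    intro N
    rw [← Nat.count_eq_card_filter_range, Nat.count_modEq_card _ hm]
    push_cast
    split_ifs <;> simp
  have hlow : Tendsto (fun N : ℕ => 1 / (m:ℝ) - 1 / N) atTop (nhds (1 / m)) := by
    simpa using tendsto_const_nhds.sub (tendsto_one_div_atTop_nhds_zero_nat (𝕜 := ℝ))
  have hup : Tendsto (fun N : ℕ => 1 / (m:ℝ) + 1 / N) atTop (nhds (1 / m)) := by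
    simpa using tendsto_const_nhds.add (tendsto_one_div_atTop_nhds_zero_nat (𝕜 := ℝ))
  refine tendsto_of_tendsto_of_tendsto_of_le_of_le' hlow hup ?_ ?_
  · filter_upwards [eventually_ge_atTop 1] with N hN
    have hNR : (0:ℝ) < N := by exact_mod_cast hN
    have hmR : (0:ℝ) < m := by exact_mod_cast hm
    rw [key]
    have h1 : ((N / m : ℕ) : ℝ) * m + ((N % m : ℕ) : ℝ) = N := by
      rw [mul_comm]; exact_mod_cast Nat.div_add_mod N m
    have h2 : ((N % m : ℕ) : ℝ) < m := by exact_mod_cast Nat.mod_lt N hm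
    have he : (0:ℝ) ≤ (if v % m < N % m then (1:ℝ) else 0) := by positivity
    rw [sub_le_iff_le_add, div_add_div _ _ (ne_of_gt hNR) (ne_of_gt hNR),
      div_le_div_iff₀ hmR (by positivity)]
    nlinarith [mul_le_mul_of_nonneg_right
      (le_add_of_nonneg_right he : ((N / m : ℕ) : ℝ) ≤ ((N / m : ℕ) : ℝ) + _) hmR.le]
  · filter_upwards [eventually_ge_atTop 1] with N hN
    have hNR : (0:ℝ) < N := by exact_mod_cast hN
    have hmR : (0:ℝ) < m := by exact_mod_cast hm
    rw [key]
    have h1 : ((N / m : ℕ) : ℝ) * m + ((N % m : ℕ) : ℝ) = N := by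
      rw [mul_comm]; exact_mod_cast Nat.div_add_mod N m
    have h3 : (0:ℝ) ≤ ((N % m : ℕ) : ℝ) := by positivity
    have he : (if v % m < N % m then (1:ℝ) else 0) ≤ 1 := by split <;> norm_num
    rw [div_add_div _ _ (ne_of_gt hmR) (ne_of_gt hNR), div_le_div_iff₀ hNR (by positivity)]
    have hmR1 : (1:ℝ) ≤ m := by exact_mod_cast hm
    nlinarith [mul_le_mul_of_nonneg_right he hmR.le]

lemma aux_dvd_pow_radical (b : ℕ) (hb : 2 ≤ b) :
    b ∣ (∏ p ∈ b.primeFactors, p) ^ b := by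
  have hb0 : b ≠ 0 := by omega
  have hr0 : (∏ p ∈ b.primeFactors, p) ≠ 0 :=
    Finset.prod_ne_zero_iff.mpr fun p hp => (Nat.prime_of_mem_primeFactors hp).ne_zero
  rw [← Nat.factorization_le_iff_dvd hb0 (pow_ne_zero _ hr0)]
  intro p
  rw [Nat.factorization_pow, Finsupp.smul_apply, smul_eq_mul]
  by_cases hp : p ∈ b.primeFactors
  · have h1 : 1 ≤ (∏ q ∈ b.primeFactors, q).factorization p :=
      (Nat.prime_of_mem_primeFactors hp).factorization_pos_of_dvd hr0
        (Finset.dvd_prod_of_mem _ hp)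
    have h2 : b.factorization p < b := Nat.factorization_lt p hb0
    calc b.factorization p ≤ b * 1 := by omega
      _ ≤ b * (∏ q ∈ b.primeFactors, q).factorization p := Nat.mul_le_mul_left _ h1
  · have : b.factorization p = 0 := by
      rw [← Nat.support_factorization] at hp
      exact Finsupp.notMem_support_iff.mp hp
    omega

/-- if  (i.e.  for every prime ) and  is a unit,
then  is u.d. in . -/
theorem stmt_10 (b : ℕ) (hb : 2 ≤ b) (a c d : ↥(Zb b))
    (ha : ∀ p : ℕ, p.Prime → p ∣ b → ∃ y : ↥(Zb b), a = (p : ↥(Zb b)) * y)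
    (hc : IsUnit c) :
    UDZb b (fun n => a * (natToZb b n) ^ 2 + c * natToZb b n + d) := by
  intro k hk α
  haveI : NeZero (b ^ k) := ⟨pow_ne_zero k (by omega)⟩
  set π : ↥(Zb b) →+* ZMod (b ^ k) := (Pi.evalRingHom _ k).comp (Zb b).subtype with hπ
  -- nilpotency of π a
  set P := b.primeFactors with hP
  have hy : ∀ p : ℕ, ∃ y : ↥(Zb b), p ∈ P → a = (p : ↥(Zb b)) * y := by
    intro p
    by_cases hp : p ∈ P
    · obtain ⟨y, hy⟩ := ha p (Nat.prime_of_mem_primeFactors hp) (Nat.dvd_of_mem_primeFactors hp)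
      exact ⟨y, fun _ => hy⟩
    · exact ⟨0, fun h => absurd h hp⟩
  choose y hy' using hy
  set r := ∏ p ∈ P, p with hr
  have h1 : a ^ P.card = ((r : ℕ) : ↥(Zb b)) * ∏ p ∈ P, y p := by
    calc a ^ P.card = ∏ _p ∈ P, a := (Finset.prod_const a).symm
      _ = ∏ p ∈ P, ((p : ↥(Zb b)) * y p) := Finset.prod_congr rfl fun p hp => hy' p hp
      _ = (∏ p ∈ P, (p : ↥(Zb b))) * ∏ p ∈ P, y p := Finset.prod_mul_distrib
      _ = ((r : ℕ) : ↥(Zb b)) * ∏ p ∈ P, y p := by rw [hr, Nat.cast_prod]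
  have hA : IsNilpotent (π a) := by
    refine ⟨P.card * (b * k), ?_⟩
    rw [pow_mul, ← map_pow, h1, map_mul, map_natCast, mul_pow, ← Nat.cast_pow]
    have hdvd : b ^ k ∣ r ^ (b * k) := by
      have := aux_dvd_pow_radical b hb
      calc b ^ k ∣ (r ^ b) ^ k := pow_dvd_pow_of_dvd this k
        _ = r ^ (b * k) := by rw [← pow_mul]
    rw [(ZMod.natCast_eq_zero_iff _ _).mpr hdvd, zero_mul]
  have hC : IsUnit (π c) := hc.map π
  -- the polynomial map on ZMod (b^k)
  set g : ZMod (b ^ k) → ZMod (b ^ k) := fun z => π a * z ^ 2 + π c * z + π d with hg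
  have hginj : Function.Injective g := by
    intro z w hzw
    have hu : IsUnit (π a * (z + w) + π c) :=
      ((Commute.all (π a) (z + w)).isNilpotent_mul_right hA).isUnit_add_right_of_commute
        hC (Commute.all _ _)
    have hzero : (z - w) * (π a * (z + w) + π c) = 0 := by
      have : g z - g w = (z - w) * (π a * (z + w) + π c) := by rw [hg]; ring
      rw [hzw, sub_self] at this
      exact this.symm
    have := (hu.mul_left_eq_zero).mp hzero
    exact sub_eq_zero.mp this
  obtain ⟨n₀, hn₀⟩ := (Finite.injective_iff_surjective.mp hginj) α
  -- rewrite the counting condition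
  have hval : ∀ n : ℕ,
      ((a * (natToZb b n) ^ 2 + c * natToZb b n + d : ↥(Zb b)).1 k = α)
        ↔ n ≡ n₀.val [MOD b ^ k] := by
    intro n
    have h2 : (a * (natToZb b n) ^ 2 + c * natToZb b n + d : ↥(Zb b)).1 k
        = g ((n : ZMod (b ^ k))) := by
      show π (a * (natToZb b n) ^ 2 + c * natToZb b n + d) = _
      have h3 : π (natToZb b n) = (n : ZMod (b ^ k)) := rfl
      rw [π.map_add, π.map_add, π.map_mul, π.map_mul, π.map_pow, h3, hg]
    rw [h2]
    constructor
    · intro h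
      have : ((n : ZMod (b ^ k))) = n₀ := hginj (by rw [h, hn₀])
      have h4 : (n : ZMod (b ^ k)) = ((n₀.val : ℕ) : ZMod (b ^ k)) := by
        rw [this]; simp [ZMod.natCast_val, ZMod.cast_id]
      exact (ZMod.natCast_eq_natCast_iff _ _ _).mp h4
    · intro h
      have h4 : (n : ZMod (b ^ k)) = ((n₀.val : ℕ) : ZMod (b ^ k)) :=
        (ZMod.natCast_eq_natCast_iff _ _ _).mpr h
      have h5 : (n : ZMod (b ^ k)) = n₀ := by
        rw [h4]; simp [ZMod.natCast_val, ZMod.cast_id]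
      rw [h5, hn₀]
  have hbk : 0 < b ^ k := pow_pos (by omega) k
  have hcast : ((b ^ k : ℕ) : ℝ) = (b : ℝ) ^ k := by push_cast; ring
  have := aux_count_tendsto (b ^ k) hbk n₀.val
  rw [hcast] at this
  refine this.congr fun N => ?_
  have heq : (Finset.range N).filter (fun n => n ≡ n₀.val [MOD b ^ k])
      = (Finset.range N).filter
        (fun n => ((fun n => a * (natToZb b n) ^ 2 + c * natToZb b n + d) n).1 k = α) :=
    Finset.filter_congr fun n _ => (hval n).symm
  rw [heq]
end

section
/- Let q be a prime power, s ≥ 1, t ≥ 0, and let C^(1), ..., C^(s) over F_q be finite-row generating matrices satisfying Condition UD-rank for quality parameter t (i.e., for every m > t and d_1+...+d_s ≤ m - t, the truncations to the first m columns of the rows c_j^(i), 1 ≤ j ≤ d_i, are linearly independent). Then the digital sequence obtained from the index sequence s_n = -n - 1 (using the q-adic digit expansion of the negative integers -n-1) is a (t, s)-sequence in base q. -/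
open Finset


lemma pred_mul_pow_add (q j : ℕ) (hq : 0 < q) : (q - 1) * q ^ j + q ^ j = q ^ (j + 1) := by
  have : (q - 1) * q ^ j + q ^ j = (q - 1 + 1) * q ^ j := by ring
  rw [this, Nat.sub_add_cancel hq, pow_succ]; ring

lemma dig_sum_lt (q : ℕ) (hq : 0 < q) (b : ℕ → ℕ) (hb : ∀ r, b r < q) (j : ℕ) :
    (∑ r ∈ range j, b r * q ^ r) + 1 ≤ q ^ j := by
  induction j with
  | zero => simp
  | succ j ih =>
    rw [Finset.sum_range_succ]
    have h1 : b j * q ^ j ≤ (q - 1) * q ^ j :=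
      Nat.mul_le_mul_right _ (by have := hb j; omega)
    have h2 := pred_mul_pow_add q j hq
    omega

lemma dig_extract (q : ℕ) (hq : 0 < q) (b : ℕ → ℕ) (hb : ∀ r, b r < q) (m j : ℕ) (hj : j < m) :
    (∑ r ∈ range m, b r * q ^ r) / q ^ j % q = b j := by
  have hsplit : ∑ r ∈ range m, b r * q ^ r
      = (∑ r ∈ range j, b r * q ^ r) + b j * q ^ j
        + ∑ r ∈ Finset.Ico (j+1) m, b r * q ^ r := by
    rw [range_eq_Ico, ← Finset.sum_Ico_consecutive _ (Nat.zero_le (j+1)) hj,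
      ← range_eq_Ico, Finset.sum_range_succ]
  have htail : ∑ r ∈ Finset.Ico (j+1) m, b r * q ^ r
      = q ^ j * (q * ∑ u ∈ range (m - (j+1)), b (j+1+u) * q ^ u) := by
    rw [Finset.sum_Ico_eq_sum_range]
    rw [Finset.mul_sum, Finset.mul_sum]
    apply Finset.sum_congr rfl
    intro u _
    rw [pow_add, pow_succ]
    ring
  set L := ∑ r ∈ range j, b r * q ^ r with hL
  set H := ∑ u ∈ range (m - (j+1)), b (j+1+u) * q ^ u with hH
  have hLlt : L < q ^ j := by have := dig_sum_lt q hq b hb j; omega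
  rw [hsplit, htail]
  have : L + b j * q ^ j + q ^ j * (q * H) = L + q ^ j * (b j + q * H) := by ring
  rw [this]
  rw [Nat.add_mul_div_left _ _ ((Nat.pow_pos (n := j) hq)), Nat.div_eq_of_lt hLlt, zero_add,
    Nat.add_mul_mod_self_left, Nat.mod_eq_of_lt (hb j)]

lemma mod_pow_eq_sum (q : ℕ) (hq : 0 < q) (n m : ℕ) :
    n % q ^ m = ∑ r ∈ range m, (n / q ^ r % q) * q ^ r := by
  induction m with
  | zero => simp [Nat.mod_one]
  | succ m ih =>
    rw [Finset.sum_range_succ, ← ih]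
    have h1 := Nat.div_add_mod n (q ^ m)
    have h3 : n % q ^ m < q ^ m := Nat.mod_lt _ ((Nat.pow_pos (n := m) hq))
    have h4 : n / q ^ m % q < q := Nat.mod_lt _ hq
    have h5 : n / q ^ m / q = n / q ^ (m+1) := by
      rw [Nat.div_div_eq_div_mul, pow_succ]
    have h2' : n / q ^ m = q * (n / q ^ (m+1)) + n / q ^ m % q := by
      rw [← h5]; exact (Nat.div_add_mod _ q).symm
    have key : n = q ^ (m+1) * (n / q ^ (m+1)) + (n % q ^ m + n / q ^ m % q * q ^ m) := by
      calc n = q ^ m * (n / q ^ m) + n % q ^ m := by omega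
        _ = q ^ m * (q * (n / q ^ (m+1)) + n / q ^ m % q) + n % q ^ m := by rw [← h2']
        _ = q ^ m * q * (n / q ^ (m+1)) + (n % q ^ m + n / q ^ m % q * q ^ m) := by ring
        _ = q ^ (m+1) * (n / q ^ (m+1)) + (n % q ^ m + n / q ^ m % q * q ^ m) := by
            rw [pow_succ]
    have hlt : n % q ^ m + n / q ^ m % q * q ^ m < q ^ (m+1) := by
      have hb : n / q ^ m % q * q ^ m ≤ (q-1) * q ^ m := Nat.mul_le_mul_right _ (by omega)
      have := pred_mul_pow_add q m hq
      omega
    conv_lhs => rw [key]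
    rw [Nat.mul_add_mod, Nat.mod_eq_of_lt hlt]


lemma tail_bound (q : ℕ) (hq : 0 < q) (y : ℕ → ℕ) (hy : ∀ j, y j < q) (d m : ℕ) (hd : d ≤ m) :
    ∑ j ∈ Finset.Ico d m, (y j : ℝ) / (q : ℝ) ^ (j+1) ≤ 1 / (q:ℝ) ^ d - 1 / (q:ℝ) ^ m := by
  have hq' : (0:ℝ) < (q:ℝ) := by exact_mod_cast hq
  induction m, hd using Nat.le_induction with
  | base => simp
  | succ m hdm ih =>
    rw [Finset.sum_Ico_succ_top hdm]
    have h1 : (y m : ℝ) ≤ (q:ℝ) - 1 := by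
      have hx : (y m : ℝ) + 1 ≤ (q:ℝ) := by exact_mod_cast hy m
      linarith
    have h2 : (y m : ℝ) / (q:ℝ)^(m+1) ≤ ((q:ℝ) - 1) / (q:ℝ)^(m+1) := by gcongr
    have h3 : ((q:ℝ)-1)/(q:ℝ)^(m+1) = 1/(q:ℝ)^m - 1/(q:ℝ)^(m+1) := by
      rw [pow_succ]; field_simp
    linarith

lemma interval_iff (q : ℕ) (hq : 0 < q) (m d a : ℕ) (hd : d ≤ m) (y : ℕ → ℕ)
    (hy : ∀ j, y j < q) :
    ((a:ℝ)/(q:ℝ)^d ≤ ∑ j ∈ range m, (y j : ℝ)/(q:ℝ)^(j+1)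
      ∧ ∑ j ∈ range m, (y j : ℝ)/(q:ℝ)^(j+1) < ((a:ℝ)+1)/(q:ℝ)^d)
    ↔ ∑ j ∈ range d, y j * q ^ (d-1-j) = a := by
  have hq' : (0:ℝ) < (q:ℝ) := by exact_mod_cast hq
  set A := ∑ j ∈ range d, y j * q ^ (d-1-j) with hA
  set ε := ∑ j ∈ Finset.Ico d m, (y j : ℝ)/(q:ℝ)^(j+1) with hε
  have hqd : (0:ℝ) < (q:ℝ)^d := by positivity
  have hxsplit : ∑ j ∈ range m, (y j:ℝ)/(q:ℝ)^(j+1) = (A:ℝ)/(q:ℝ)^d + ε := by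
    rw [range_eq_Ico, ← Finset.sum_Ico_consecutive _ (Nat.zero_le d) hd, ← range_eq_Ico, hε]
    congr 1
    rw [hA]
    push_cast
    rw [Finset.sum_div]
    apply Finset.sum_congr rfl
    intro j hj
    have hj' : j < d := mem_range.mp hj
    have hpow : (q:ℝ)^d = (q:ℝ)^(d-1-j) * (q:ℝ)^(j+1) := by
      rw [← pow_add]; congr 1; omega
    rw [hpow]
    field_simp
  have hε0 : 0 ≤ ε := Finset.sum_nonneg fun j _ => by positivity
  have hεlt : ε < 1/(q:ℝ)^d := by
    have hb := tail_bound q hq y hy d m hd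
    have hm : (0:ℝ) < 1/(q:ℝ)^m := by positivity
    rw [← hε] at hb
    linarith
  rw [hxsplit]
  have hA' : (A:ℝ)/(q:ℝ)^d * (q:ℝ)^d = (A:ℝ) := div_mul_cancel₀ _ hqd.ne'
  have ha1 : (a:ℝ)/(q:ℝ)^d * (q:ℝ)^d = (a:ℝ) := div_mul_cancel₀ _ hqd.ne'
  have ha2 : ((a:ℝ)+1)/(q:ℝ)^d * (q:ℝ)^d = (a:ℝ)+1 := div_mul_cancel₀ _ hqd.ne'
  constructor
  · rintro ⟨h1, h2⟩
    have h1' := mul_le_mul_of_nonneg_right h1 hqd.le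
    rw [add_mul, hA', ha1] at h1'
    have h2' := mul_lt_mul_of_pos_right h2 hqd
    rw [add_mul, hA', ha2] at h2'
    have e3 : ε * (q:ℝ)^d < 1 := by
      have := mul_lt_mul_of_pos_right hεlt hqd
      rwa [one_div, inv_mul_cancel₀ hqd.ne'] at this
    have e4 : (0:ℝ) ≤ ε * (q:ℝ)^d := by positivity
    have c1 : (A:ℝ) < (a:ℝ) + 1 := by linarith
    have c2 : (a:ℝ) < (A:ℝ) + 1 := by linarith
    have d1 : A < a + 1 := by exact_mod_cast c1
    have d2 : a < A + 1 := by exact_mod_cast c2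
    omega
  · intro h
    rw [h]
    constructor
    · linarith
    · have hsplit2 : ((a:ℝ)+1)/(q:ℝ)^d = (a:ℝ)/(q:ℝ)^d + 1/(q:ℝ)^d := by rw [add_div]
      rw [hsplit2]
      linarith

lemma rev_digits (q : ℕ) (hq : 0 < q) (d a : ℕ) (ha : a < q ^ d) (y : ℕ → ℕ)
    (hy : ∀ j, y j < q) :
    (∑ j ∈ range d, y j * q ^ (d-1-j) = a) ↔ ∀ j < d, y j = a / q ^ (d-1-j) % q := by
  constructor
  · intro h j hj
    have hrev : ∑ j ∈ range d, y j * q ^ (d-1-j) = ∑ r ∈ range d, y (d-1-r) * q ^ r := by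
      rw [← Finset.sum_range_reflect (fun r => y (d-1-r) * q ^ r) d]
      apply Finset.sum_congr rfl
      intro i hi
      have hi' := mem_range.mp hi
      have hii : d-1-(d-1-i) = i := by omega
      simp only [hii]
    have hdig := dig_extract q hq (fun r => y (d-1-r)) (fun r => hy _) d (d-1-j) (by omega)
    rw [← hrev, h] at hdig
    have hdig' : a / q ^ (d-1-j) % q = y (d-1-(d-1-j)) := hdig
    have hjj : d-1-(d-1-j) = j := by omega
    rw [hjj] at hdig'
    exact hdig'.symm
  · intro h
    have ha' : a % q ^ d = a := Nat.mod_eq_of_lt ha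
    have hsum := mod_pow_eq_sum q hq a d
    rw [ha'] at hsum
    conv_rhs => rw [hsum]
    rw [← Finset.sum_range_reflect (fun r => (a / q ^ r % q) * q ^ r) d]
    apply Finset.sum_congr rfl
    intro j hj
    have hj' := mem_range.mp hj
    rw [h j hj']


lemma card_filter_comp {α β : Type*} [DecidableEq β] [Fintype β] (sA : Finset α) (f : α → β)
    (hinj : Set.InjOn f sA) (hcard : sA.card = Fintype.card β) (Q : β → Prop) [DecidablePred Q] :
    (sA.filter (fun a => Q (f a))).card = (Finset.univ.filter Q).card := by
  have himg : sA.image f = Finset.univ := by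
    apply Finset.eq_univ_of_card
    rw [Finset.card_image_of_injOn hinj, hcard]
  rw [← himg, Finset.filter_image,
    Finset.card_image_of_injOn (hinj.mono (Finset.coe_subset.mpr (Finset.filter_subset _ _)))]

lemma fiber_card {ι κ F : Type} [Fintype ι] [Fintype κ] [Field F] [Fintype F]
    [DecidableEq ι] [DecidableEq κ] [DecidableEq F]
    (M : Matrix ι κ F) (hli : LinearIndependent F M) (y : ι → F) :
    (Finset.univ.filter (fun v : κ → F => M.mulVec v = y)).card * Fintype.card (ι → F)
      = Fintype.card (κ → F) := by
  have hsurj : Function.Surjective M.mulVecLin := by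
    rw [← LinearMap.range_eq_top]
    apply Submodule.eq_top_of_finrank_eq
    rw [Module.finrank_pi]
    exact hli.rank_matrix
  have hfib : ∀ y' : ι → F, (Finset.univ.filter (fun v : κ → F => M.mulVec v = y')).card
      = (Finset.univ.filter (fun v : κ → F => M.mulVec v = y)).card := by
    intro y'
    obtain ⟨v0, hv0⟩ := hsurj y
    obtain ⟨v1, hv1⟩ := hsurj y'
    rw [Matrix.mulVecLin_apply] at hv0 hv1
    apply Finset.card_nbij' (i := fun v => v - v1 + v0) (j := fun v => v - v0 + v1)
    · intro v hv
      simp only [Finset.mem_coe, Finset.mem_filter, Finset.mem_univ, true_and] at hv ⊢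
      rw [Matrix.mulVec_add, Matrix.mulVec_sub, hv, hv0, hv1]
      simp
    · intro v hv
      simp only [Finset.mem_coe, Finset.mem_filter, Finset.mem_univ, true_and] at hv ⊢
      rw [Matrix.mulVec_add, Matrix.mulVec_sub, hv, hv0, hv1]
      simp
    · intro v _
      ext x; simp only [Pi.add_apply, Pi.sub_apply]; ring
    · intro v _
      ext x; simp only [Pi.add_apply, Pi.sub_apply]; ring
  have hsum := Finset.card_eq_sum_card_fiberwise
    (f := fun v : κ → F => M.mulVec v) (s := Finset.univ) (t := Finset.univ)
    (fun v _ => Finset.mem_univ _)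
  rw [Finset.card_univ] at hsum
  rw [hsum]
  rw [Finset.sum_congr rfl (fun y' _ => hfib y')]
  rw [Finset.sum_const, Finset.card_univ, smul_eq_mul, mul_comm]



/-- The `r`-th `q`-adic digit of the negative integer `-n-1`: if `a_r` are the base-`q` digits
of `n`, the digits of `-n-1` are `q - 1 - a_r`. -/
def negDigitF (q : ℕ) (hq : 0 < q) (n : ℕ) (r : ℕ) : Fin q :=
  ⟨q - 1 - (n / q ^ r % q), by omega⟩

/-- The `m`-digit truncation `[x_n]_{q,m}` (coordinate `i`) of the point produced by the
digital method from the `q`-adic digits of `s_n = -n-1`, with generating matrices `c`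
(rows indexed from `1`) and bijections `ψ r`, `Λ i j`. -/
noncomputable def digPointNegTrunc {F : Type} [Field F] (q : ℕ) (hq : 0 < q) (s : ℕ)
    (c : Fin s → ℕ → ℕ → F) (ψ : ℕ → Fin q ≃ F) (Λ : Fin s → ℕ → F ≃ Fin q)
    (m : ℕ) (n : ℕ) (i : Fin s) : ℝ :=
  ∑ j ∈ Finset.range m,
    (((Λ i (j + 1)) (∑ᶠ r : ℕ, c i (j + 1) r * ψ r (negDigitF q hq n r)) : Fin q) : ℝ)
      / (q : ℝ) ^ (j + 1)

open Classical in
/-- if the finite-row generating matrices over `F_q` satisfy the rank condition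
for quality parameter `t` (truncations to the first `m` columns of the first `d_i` rows are
linearly independent whenever `1 ≤ d_1+⋯+d_s ≤ m - t`), then the digital sequence obtained
from the index sequence `s_n = -n-1` is a `(t, s)`-sequence in base `q`: for all `k ≥ 0` and
`m > t`, the `m`-digit truncated points with `k q^m ≤ n < (k+1) q^m` form a `(t, m, s)`-net,
i.e. every elementary interval of volume `q^{t-m}` contains exactly `q^t` of them. -/
theorem stmt_13 {F : Type} [Field F] [Fintype F] (q : ℕ) (hq : Fintype.card F = q)
    (hq0 : 0 < q) (s : ℕ) (hs : 1 ≤ s) (t : ℕ) (c : Fin s → ℕ → ℕ → F)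
    (hfin : ∀ i j, ∃ R : ℕ, ∀ r, R ≤ r → c i j r = 0)
    (hrank : ∀ m : ℕ, t < m → ∀ d : Fin s → ℕ, 1 ≤ ∑ i, d i → ∑ i, d i ≤ m - t →
      LinearIndependent F
        (fun p : Σ i : Fin s, Fin (d i) => fun rr : Fin m => c p.1 (p.2.1 + 1) rr.1))
    (ψ : ℕ → Fin q ≃ F) (Λ : Fin s → ℕ → F ≃ Fin q) :
    ∀ k m : ℕ, t < m → ∀ d : Fin s → ℕ, ∑ i, d i = m - t →
      ∀ a : Fin s → ℕ, (∀ i, a i < q ^ d i) →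
        ((Finset.Ico (k * q ^ m) ((k + 1) * q ^ m)).filter
          (fun n => ∀ i,
            (a i : ℝ) / (q : ℝ) ^ d i ≤ digPointNegTrunc q hq0 s c ψ Λ m n i
              ∧ digPointNegTrunc q hq0 s c ψ Λ m n i < ((a i : ℝ) + 1) / (q : ℝ) ^ d i)).card
          = q ^ t := by
  intro k m hm d hd a ha
  have hqm : 0 < q ^ m := (Nat.pow_pos (n := m) hq0)
  have hdsum1 : 1 ≤ ∑ i, d i := by omega
  have hdlem : ∀ i, d i ≤ m := fun i =>
    le_trans (Finset.single_le_sum (f := d) (fun _ _ => Nat.zero_le _) (Finset.mem_univ i))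
      (by omega)
  choose R hR using hfin
  set block := Finset.Ico (k * q ^ m) ((k + 1) * q ^ m) with hblock
  -- digits of n at positions ≥ m are constant on the block
  have hdivblock : ∀ n ∈ block, n / q ^ m = k := by
    intro n hn
    rw [hblock, Finset.mem_Ico] at hn
    exact Nat.div_eq_of_lt_le hn.1 hn.2
  have hblockdig : ∀ n ∈ block, ∀ r, m ≤ r →
      negDigitF q hq0 n r = negDigitF q hq0 (k * q ^ m) r := by
    intro n hn r hr
    have hpow : q ^ r = q ^ m * q ^ (r - m) := by rw [← pow_add]; congr 1; omega
    have hk : k * q ^ m ∈ block := by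
      rw [hblock, Finset.mem_Ico]
      constructor
      · exact le_refl _
      · have : k * q ^ m + q ^ m ≤ (k+1) * q ^ m := by ring_nf; omega
        omega
    have h1 : n / q ^ r = k / q ^ (r - m) := by
      rw [hpow, ← Nat.div_div_eq_div_mul, hdivblock n hn]
    have h2 : (k * q ^ m) / q ^ r = k / q ^ (r - m) := by
      rw [hpow, ← Nat.div_div_eq_div_mul, hdivblock _ hk]
    apply Fin.ext
    simp only [negDigitF, h1, h2]
  -- the constant tails
  set ε : Fin s → ℕ → F := fun i j =>
    ∑ r ∈ Finset.Ico m (max (R i (j+1)) m), c i (j+1) r * ψ r (negDigitF q hq0 (k * q ^ m) r)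
    with hε
  have hfinsum : ∀ n ∈ block, ∀ (i : Fin s) (j : ℕ),
      (∑ᶠ r : ℕ, c i (j+1) r * ψ r (negDigitF q hq0 n r))
      = (∑ r ∈ range m, c i (j+1) r * ψ r (negDigitF q hq0 n r)) + ε i j := by
    intro n hn i j
    have hsupp : Function.support (fun r => c i (j+1) r * ψ r (negDigitF q hq0 n r))
        ⊆ ↑(range (max (R i (j+1)) m)) := by
      intro r hr
      simp only [Function.mem_support] at hr
      simp only [Finset.coe_range, Set.mem_Iio]
      by_contra hcon
      push_neg at hcon
      have : c i (j+1) r = 0 := hR i (j+1) r (le_trans (le_max_left _ _) hcon)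
      rw [this, zero_mul] at hr
      exact hr rfl
    rw [finsum_eq_sum_of_support_subset _ hsupp]
    rw [range_eq_Ico, ← Finset.sum_Ico_consecutive _ (Nat.zero_le m) (le_max_right _ _),
      ← range_eq_Ico]
    congr 1
    rw [hε]
    apply Finset.sum_congr rfl
    intro r hr
    rw [Finset.mem_Ico] at hr
    rw [hblockdig n hn r hr.1]
  -- the matrix and target
  set M : Matrix (Σ i : Fin s, Fin (d i)) (Fin m) F := fun p r => c p.1 (p.2.1 + 1) r.1 with hM
  set target : (Σ i : Fin s, Fin (d i)) → F := fun p =>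
    (Λ p.1 (p.2.1 + 1)).symm ⟨a p.1 / q ^ (d p.1 - 1 - p.2.1) % q, Nat.mod_lt _ hq0⟩
      - ε p.1 p.2.1 with htarget
  set f : ℕ → (Fin m → F) := fun n r => ψ r.1 (negDigitF q hq0 n r.1) with hf
  -- the predicate equivalence
  have hpred : ∀ n ∈ block,
      ((∀ i, (a i : ℝ) / (q : ℝ) ^ d i ≤ digPointNegTrunc q hq0 s c ψ Λ m n i
              ∧ digPointNegTrunc q hq0 s c ψ Λ m n i < ((a i : ℝ) + 1) / (q : ℝ) ^ d i))
      ↔ M.mulVec (f n) = target := by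
    intro n hn
    rw [funext_iff, Sigma.forall]
    apply forall_congr'
    intro i
    have hyval : ∀ j : ℕ,
        ((Λ i (j+1)) (∑ᶠ r : ℕ, c i (j+1) r * ψ r (negDigitF q hq0 n r)) : Fin q).val < q :=
      fun j => Fin.is_lt _
    have hx : digPointNegTrunc q hq0 s c ψ Λ m n i
        = ∑ j ∈ range m,
          ((((Λ i (j+1)) (∑ᶠ r : ℕ, c i (j+1) r * ψ r (negDigitF q hq0 n r)) : Fin q).val : ℝ))
            / (q:ℝ)^(j+1) := rfl
    rw [hx, interval_iff q hq0 m (d i) (a i) (hdlem i) _ hyval,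
      rev_digits q hq0 (d i) (a i) (ha i) _ hyval]
    constructor
    · intro h j
      have hj := h j.1 j.2
      -- turn digit equation into mulVec equation
      have h1 : (Λ i (j.1+1)) (∑ᶠ r : ℕ, c i (j.1+1) r * ψ r (negDigitF q hq0 n r))
          = ⟨a i / q ^ (d i - 1 - j.1) % q, Nat.mod_lt _ hq0⟩ := Fin.ext hj
      have h2 : (∑ᶠ r : ℕ, c i (j.1+1) r * ψ r (negDigitF q hq0 n r))
          = (Λ i (j.1+1)).symm ⟨a i / q ^ (d i - 1 - j.1) % q, Nat.mod_lt _ hq0⟩ :=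
        (Equiv.eq_symm_apply _).mpr h1
      rw [hfinsum n hn i j.1] at h2
      show (∑ r : Fin m, M ⟨i, j⟩ r * f n r) = target ⟨i, j⟩
      rw [htarget]
      simp only [hM, hf]
      rw [Fin.sum_univ_eq_sum_range (fun r => c i (j.1+1) r * ψ r (negDigitF q hq0 n r)) m]
      rw [eq_sub_iff_add_eq]
      exact h2
    · intro h j hj
      have hmv := h ⟨j, hj⟩
      have h2 : (∑ r ∈ range m, c i (j+1) r * ψ r (negDigitF q hq0 n r))
          = (Λ i (j+1)).symm ⟨a i / q ^ (d i - 1 - j) % q, Nat.mod_lt _ hq0⟩ - ε i j := by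
        rw [← Fin.sum_univ_eq_sum_range (fun r => c i (j+1) r * ψ r (negDigitF q hq0 n r)) m]
        exact hmv
      have h3 : (∑ᶠ r : ℕ, c i (j+1) r * ψ r (negDigitF q hq0 n r))
          = (Λ i (j+1)).symm ⟨a i / q ^ (d i - 1 - j) % q, Nat.mod_lt _ hq0⟩ := by
        rw [hfinsum n hn i j, h2]
        ring
      have h4 := (Equiv.eq_symm_apply _).mp h3
      rw [h4]
  -- rewrite the filter
  rw [Finset.filter_congr hpred]
  -- injectivity of f on block
  have hinj : Set.InjOn f block := by
    intro n hn n' hn' hfe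
    have hdig : ∀ r < m, n / q ^ r % q = n' / q ^ r % q := by
      intro r hr
      have := congr_fun hfe ⟨r, hr⟩
      simp only [hf] at this
      have h2 := (ψ r).injective this
      have h3 : (negDigitF q hq0 n r).val = (negDigitF q hq0 n' r).val := by rw [h2]
      simp only [negDigitF] at h3
      have b1 : n / q ^ r % q < q := Nat.mod_lt _ hq0
      have b2 : n' / q ^ r % q < q := Nat.mod_lt _ hq0
      omega
    have hmod : n % q ^ m = n' % q ^ m := by
      rw [mod_pow_eq_sum q hq0 n m, mod_pow_eq_sum q hq0 n' m]
      exact Finset.sum_congr rfl (fun r hr => by rw [hdig r (mem_range.mp hr)])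
    have e1 := Nat.div_add_mod n (q ^ m)
    have e2 := Nat.div_add_mod n' (q ^ m)
    rw [hdivblock n hn] at e1
    rw [hdivblock n' hn'] at e2
    omega
  have hcardblock : block.card = Fintype.card (Fin m → F) := by
    rw [hblock, Nat.card_Ico]
    have h1 : (k+1) * q ^ m = k * q ^ m + q ^ m := by ring
    rw [Fintype.card_fun, Fintype.card_fin, hq]
    omega
  rw [card_filter_comp block f hinj hcardblock (fun v => M.mulVec v = target)]
  -- linear algebra count
  have hli : LinearIndependent F M := hrank m hm d hdsum1 (le_of_eq hd)
  have hfc := fiber_card M hli target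
  have hcard1 : Fintype.card ((Σ i : Fin s, Fin (d i)) → F) = q ^ (m - t) := by
    rw [Fintype.card_fun, hq, Fintype.card_sigma]
    simp only [Fintype.card_fin]
    rw [hd]
  have hcard2 : Fintype.card (Fin m → F) = q ^ m := by
    rw [Fintype.card_fun, Fintype.card_fin, hq]
  rw [hcard1, hcard2] at hfc
  have hpows : q ^ m = q ^ t * q ^ (m - t) := by
    rw [← pow_add]; congr 1; omega
  rw [hpows] at hfc
  exact Nat.eq_of_mul_eq_mul_right ((Nat.pow_pos (n := (m-t)) hq0)) hfc
end
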